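/- arXiv:2605.26439 — 5 statements merged into one kernel-verified Lean document; each statement's English description precedes it below -/
import Mathlib

section
/- Let N ∈ ℕ, let μ > 0 and let λ_1, …, λ_N be positive real numbers, all distinct from μ and pairwise distinct. Then the distance in L²(0,∞) from the function t ↦ e^{−μ t} to the linear span of the functions {t ↦ e^{−λ_k t} : 1 ≤ k ≤ N} equals (2μ)^{−1/2} ∏_{k=1}^N |λ_k − μ|/(λ_k + μ). -/
open MeasureTheory Real Set Metric

lemma integral_exp_neg_mul_Ioi_zero {a : ℝ} (ha : 0 < a) :
    ∫ t in Ioi (0:ℝ), Real.exp (-a * t) = a⁻¹ := by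
  have h := integral_comp_mul_left_Ioi (fun x => Real.exp (-x)) 0 ha
  simp only [mul_zero, integral_exp_neg_Ioi, neg_zero, Real.exp_zero, smul_eq_mul, mul_one] at h
  simpa [neg_mul] using h

lemma inner_exp_exp {a b : ℝ} (ha : 0 < a) (hb : 0 < b)
    (f g : Lp ℝ 2 (volume.restrict (Ioi (0:ℝ))))
    (hf : (f : ℝ → ℝ) =ᵐ[volume.restrict (Ioi (0:ℝ))] fun t => Real.exp (-a * t))
    (hg : (g : ℝ → ℝ) =ᵐ[volume.restrict (Ioi (0:ℝ))] fun t => Real.exp (-b * t)) :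
    (inner ℝ f g : ℝ) = (a + b)⁻¹ := by
  rw [MeasureTheory.L2.inner_def]
  have : ∀ᵐ t ∂(volume.restrict (Ioi (0:ℝ))),
      (inner ℝ (f t) (g t) : ℝ) = Real.exp (-(a+b) * t) := by
    filter_upwards [hf, hg] with t hft hgt
    simp only [RCLike.inner_apply, starRingEnd_apply, star_trivial, hft, hgt,
      ← Real.exp_add]
    ring_nf
  rw [integral_congr_ae this, integral_exp_neg_mul_Ioi_zero (by linarith)]

lemma lagrange_pf {n : ℕ} (v : Fin n → ℝ) (hv : Function.Injective v) (p : Polynomial ℝ)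
    (hdeg : p.degree < n) (x : ℝ) (hx : ∀ i, x ≠ v i) :
    p.eval x = (∏ i, (x - v i)) *
      ∑ i, Lagrange.nodalWeight Finset.univ v i * (x - v i)⁻¹ * p.eval (v i) := by
  have h1 : p = Lagrange.interpolate Finset.univ v (fun i => p.eval (v i)) :=
    Lagrange.eq_interpolate hv.injOn (by simpa using hdeg)
  conv_lhs => rw [h1]
  rw [Lagrange.eval_interpolate_not_at_node _ (fun i _ => hx i), Lagrange.eval_nodal]

/-- Gram/Cauchy determinant formula: the distance in `L²(0,∞)` from
`e^{-μt}` to the span of finitely many exponentials `e^{-λ_k t}` equals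
`(2μ)^{-1/2} ∏_k |λ_k - μ|/(λ_k + μ)`. -/
theorem stmt4 (N : ℕ) (μ : ℝ) (hμ : 0 < μ) (lam : Fin N → ℝ)
    (hpos : ∀ k, 0 < lam k) (hne : ∀ k, lam k ≠ μ)
    (hinj : Function.Injective lam)
    (G : Lp ℝ 2 (volume.restrict (Ioi (0 : ℝ))))
    (hG : (G : ℝ → ℝ) =ᵐ[volume.restrict (Ioi (0 : ℝ))]
      fun t => Real.exp (-μ * t))
    (F : Fin N → Lp ℝ 2 (volume.restrict (Ioi (0 : ℝ))))
    (hF : ∀ k, (F k : ℝ → ℝ) =ᵐ[volume.restrict (Ioi (0 : ℝ))]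
      fun t => Real.exp (-lam k * t)) :
    infDist G
        ((Submodule.span ℝ (Set.range F) :
          Submodule ℝ (Lp ℝ 2 (volume.restrict (Ioi (0 : ℝ))))) :
          Set (Lp ℝ 2 (volume.restrict (Ioi (0 : ℝ)))))
      = (Real.sqrt (2 * μ))⁻¹ * ∏ k, |lam k - μ| / (lam k + μ) := by
  classical
  have hFF : ∀ j k, (inner ℝ (F j) (F k) : ℝ) = (lam j + lam k)⁻¹ := fun j k =>
    inner_exp_exp (hpos j) (hpos k) _ _ (hF j) (hF k)
  have hGF : ∀ k, (inner ℝ G (F k) : ℝ) = (μ + lam k)⁻¹ := fun k =>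
    inner_exp_exp hμ (hpos k) _ _ hG (hF k)
  have hFG : ∀ k, (inner ℝ (F k) G : ℝ) = (lam k + μ)⁻¹ := fun k =>
    inner_exp_exp (hpos k) hμ _ _ (hF k) hG
  have hGG : (inner ℝ G G : ℝ) = (μ + μ)⁻¹ := inner_exp_exp hμ hμ _ _ hG hG
  -- the nodes
  set v : Fin (N+1) → ℝ := Fin.cons (-μ) (fun k => -lam k) with hv
  have hv0 : v 0 = -μ := rfl
  have hvs : ∀ k, v k.succ = -lam k := fun k => rfl
  have hvneg : ∀ i, v i < 0 := by
    intro i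
    induction i using Fin.cases with
    | zero => simpa [hv0] using hμ
    | succ k => simpa [hvs] using (hpos k)
  have hvinj : Function.Injective v := by
    rw [hv, Fin.cons_injective_iff]
    constructor
    · rintro ⟨k, hk⟩
      simp only [neg_inj] at hk
      exact hne k hk
    · intro a b hab
      exact hinj (by simpa using hab)
  set A : ℝ := ∏ k, (μ - lam k) / (μ + lam k) with hA
  set Np : Polynomial ℝ := Polynomial.C A * Lagrange.nodal Finset.univ lam with hNp
  have hevalN : ∀ x, Np.eval x = A * ∏ k, (x - lam k) := by
    intro x; simp [hNp, Lagrange.eval_nodal]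
  have hdeg : Np.degree < ((N+1 : ℕ) : WithBot ℕ) := by
    calc Np.degree ≤ (Polynomial.C A).degree + (Lagrange.nodal Finset.univ lam).degree :=
          Polynomial.degree_mul_le _ _
      _ ≤ 0 + ((N:ℕ) : WithBot ℕ) := by
          apply add_le_add Polynomial.degree_C_le
          rw [Lagrange.degree_nodal]
          simp
      _ = ((N:ℕ) : WithBot ℕ) := zero_add _
      _ < ((N+1 : ℕ) : WithBot ℕ) := by exact_mod_cast Nat.lt_succ_self N
  set c : Fin (N+1) → ℝ := fun i => Lagrange.nodalWeight Finset.univ v i * Np.eval (v i)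
    with hc
  have key : ∀ x : ℝ, 0 < x →
      A * ∏ k, (x - lam k) = (∏ i, (x - v i)) * ∑ i, c i * (x - v i)⁻¹ := by
    intro x hx
    have hxne : ∀ i, x ≠ v i := fun i => ((hvneg i).trans hx).ne'
    have h2 := lagrange_pf v hvinj Np hdeg x hxne
    rw [hevalN] at h2
    rw [h2]
    congr 1
    apply Finset.sum_congr rfl
    intro i _
    rw [hc]
    ring
  have hprodne : ∀ x : ℝ, 0 < x → (∏ i, (x - v i)) ≠ 0 := by
    intro x hx
    apply Finset.prod_ne_zero_iff.mpr
    intro i _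
    have := hvneg i
    intro hcon
    nlinarith [sub_eq_zero.mp hcon]
  -- c 0 = 1
  have herase : (Finset.univ : Finset (Fin (N+1))).erase 0
      = Finset.univ.map ⟨Fin.succ, Fin.succ_injective _⟩ := by
    rw [Fin.univ_succ, Finset.erase_cons]
  have hc0 : c 0 = 1 := by
    rw [hc]
    simp only
    rw [Lagrange.nodalWeight, herase, Finset.prod_map, hevalN, hv0]
    simp only [Function.Embedding.coeFn_mk, hvs]
    rw [hA, ← Finset.prod_mul_distrib, ← Finset.prod_mul_distrib]
    apply Finset.prod_eq_one
    intro k _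
    have h1 : lam k - μ ≠ 0 := sub_ne_zero.mpr (hne k)
    have h2 : μ + lam k ≠ 0 := by have := hpos k; positivity
    have e1 : -μ - -lam k = lam k - μ := by ring
    have e2 : -μ - lam k = -(μ + lam k) := by ring
    rw [e1, e2, div_mul_eq_mul_div, inv_mul_eq_div, div_eq_one_iff_eq h1,
      div_eq_iff h2]
    ring
  set d : Fin N → ℝ := fun k => -c k.succ with hd
  -- the expanded identity
  have expand : ∀ x : ℝ, 0 < x →
      (x + μ)⁻¹ - ∑ k, d k * (x + lam k)⁻¹
        = A * (∏ k, (x - lam k)) / ∏ i, (x - v i) := by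
    intro x hx
    rw [key x hx, mul_div_cancel_left₀ _ (hprodne x hx)]
    rw [Fin.sum_univ_succ, hc0, hv0, one_mul, sub_neg_eq_add]
    simp only [hd, hvs, sub_neg_eq_add, neg_mul, Finset.sum_neg_distrib, sub_neg_eq_add]
  -- the candidate nearest point
  set w : Lp ℝ 2 (volume.restrict (Ioi (0:ℝ))) := ∑ k, d k • F k with hw
  have horthF : ∀ j, (inner ℝ (G - w) (F j) : ℝ) = 0 := by
    intro j
    have h1 := expand (lam j) (hpos j)
    have h2 : (∏ k, (lam j - lam k)) = 0 :=
      Finset.prod_eq_zero (Finset.mem_univ j) (sub_self _)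
    rw [h2, mul_zero, zero_div] at h1
    rw [inner_sub_left, hw, sum_inner]
    simp only [real_inner_smul_left, hFF]
    rw [hGF j]
    have h3 : ∑ k, d k * (lam k + lam j)⁻¹ = ∑ k, d k * (lam j + lam k)⁻¹ :=
      Finset.sum_congr rfl (fun k _ => by rw [add_comm (lam k)])
    rw [h3, add_comm μ (lam j)]
    exact h1
  have horth : ∀ u ∈ Submodule.span ℝ (Set.range F), (inner ℝ (G - w) u : ℝ) = 0 := by
    intro u hu
    induction hu using Submodule.span_induction with
    | mem x hx => obtain ⟨j, rfl⟩ := hx; exact horthF j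
    | zero => simp
    | add x y _ _ hx hy => rw [inner_add_right, hx, hy, add_zero]
    | smul a x _ hx => rw [real_inner_smul_right, hx, mul_zero]
  have hwmem : w ∈ Submodule.span ℝ (Set.range F) :=
    Submodule.sum_mem _ (fun k _ => Submodule.smul_mem _ _ (Submodule.subset_span ⟨k, rfl⟩))
  set P : ℝ := ∏ k, |lam k - μ| / (lam k + μ) with hP
  have hPnonneg : 0 ≤ P :=
    Finset.prod_nonneg (fun k _ => div_nonneg (abs_nonneg _)
      (by have := hpos k; positivity))
  have hval : (inner ℝ (G - w) G : ℝ) = (2*μ)⁻¹ * P^2 := by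
    have h1 := expand μ hμ
    have hprod : (∏ i, (μ - v i)) = (μ + μ) * ∏ k, (μ + lam k) := by
      rw [Fin.prod_univ_succ]
      simp only [hv0, hvs, sub_neg_eq_add]
    rw [inner_sub_left, hw, sum_inner]
    simp only [real_inner_smul_left, hFG]
    rw [hGG]
    have h3 : ∑ k, d k * (lam k + μ)⁻¹ = ∑ k, d k * (μ + lam k)⁻¹ :=
      Finset.sum_congr rfl (fun k _ => by rw [add_comm (lam k)])
    rw [h3, h1, hprod, hA, hP]
    have h2 : (∏ k, |lam k - μ| / (lam k + μ))^2
        = ∏ k, ((μ - lam k)/(μ + lam k) * ((μ - lam k) * (μ + lam k)⁻¹)) := by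
      rw [← Finset.prod_pow]
      apply Finset.prod_congr rfl
      intro k _
      have h4 : lam k + μ ≠ 0 := by have := hpos k; positivity
      have h5 : μ + lam k ≠ 0 := by have := hpos k; positivity
      rw [div_pow, sq_abs]
      field_simp
      ring
    rw [h2, Finset.prod_mul_distrib, Finset.prod_mul_distrib, Finset.prod_inv_distrib]
    rw [div_eq_mul_inv, mul_inv]
    ring
  have hww : (inner ℝ (G - w) w : ℝ) = 0 := horth w hwmem
  have hnorm2 : ‖G - w‖^2 = (2*μ)⁻¹ * P^2 := by
    rw [← real_inner_self_eq_norm_sq, inner_sub_right (𝕜 := ℝ), hww, sub_zero, hval]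
  have hnormval : ‖G - w‖ = (Real.sqrt (2*μ))⁻¹ * P := by
    have h6 : Real.sqrt ((2*μ)⁻¹ * P^2) = (Real.sqrt (2*μ))⁻¹ * P := by
      rw [Real.sqrt_mul (show (0:ℝ) ≤ (2*μ)⁻¹ by positivity) (P^2),
        Real.sqrt_inv, Real.sqrt_sq hPnonneg]
    rw [← h6, ← hnorm2, Real.sqrt_sq (norm_nonneg _)]
  have hmain : infDist G
      ((Submodule.span ℝ (Set.range F) :
        Submodule ℝ (Lp ℝ 2 (volume.restrict (Ioi (0 : ℝ))))) :
        Set (Lp ℝ 2 (volume.restrict (Ioi (0 : ℝ))))) = ‖G - w‖ := by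
    apply le_antisymm
    · rw [← dist_eq_norm]
      exact infDist_le_dist_of_mem hwmem
    · rw [infDist_eq_iInf]
      haveI : Nonempty ↥((Submodule.span ℝ (Set.range F) :
          Submodule ℝ (Lp ℝ 2 (volume.restrict (Ioi (0 : ℝ))))) :
          Set (Lp ℝ 2 (volume.restrict (Ioi (0 : ℝ))))) :=
        ⟨⟨0, Submodule.zero_mem _⟩⟩
      apply le_ciInf
      rintro ⟨u, hu⟩
      rw [dist_eq_norm]
      have hdecomp : G - u = (G - w) + (w - u) := by abel
      rw [hdecomp]
      nlinarith [norm_add_sq_real (G - w) (w - u), norm_nonneg (G - w),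
        norm_nonneg ((G - w) + (w - u)), sq_nonneg ‖w - u‖,
        horth (w - u) (Submodule.sub_mem _ hwmem hu)]
  rw [hmain, hnormval, hP]
end

section
/- Let (λ_k)_{k≥1} be a sequence of pairwise distinct positive real numbers with ∑_{k≥1} 1/λ_k < ∞. Then for every n ∈ ℕ⁺, the infinite product ∏_{k≠n} |λ_k − λ_n|/(λ_k + λ_n) converges to a positive number, and the distance in L²(0,∞) from the function t ↦ e^{−λ_n t} to the closure of the linear span of {t ↦ e^{−λ_k t} : k ≠ n} equals (2λ_n)^{−1/2} ∏_{k≠n} |λ_k − λ_n|/(λ_k + λ_n). -/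
open MeasureTheory Real Set Metric
open Finset Filter Topology

noncomputable section

lemma memE {x : ℝ} (hx : 0 < x) :
    MemLp (fun t => Real.exp (-x * t)) 2 (volume.restrict (Ioi (0:ℝ))) := by
  have hcont : Continuous fun t : ℝ => Real.exp (-x * t) := by continuity
  rw [memLp_two_iff_integrable_sq hcont.aestronglyMeasurable]
  have h : (fun t : ℝ => Real.exp (-x * t) ^ 2) = fun t => Real.exp (-(2*x) * t) := by
    ext t; rw [← Real.exp_nat_mul]; ring_nf
  rw [h]
  exact exp_neg_integrableOn_Ioi 0 (by linarith)

def EE (x : ℝ) : Lp ℝ 2 (volume.restrict (Ioi (0:ℝ))) :=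
  if h : 0 < x then (memE h).toLp _ else 0

lemma EE_coe {x : ℝ} (hx : 0 < x) :
    (EE x : ℝ → ℝ) =ᵐ[volume.restrict (Ioi (0:ℝ))] fun t => Real.exp (-x * t) := by
  rw [EE, dif_pos hx]; exact (memE hx).coeFn_toLp

lemma integral_exp_neg_mul {c : ℝ} (hc : 0 < c) :
    ∫ t in Ioi (0:ℝ), Real.exp (-(c * t)) = 1 / c := by
  have := integral_comp_mul_left_Ioi (fun u => Real.exp (-u)) 0 hc
  simp only [mul_zero] at this
  rw [this, integral_exp_neg_Ioi_zero, smul_eq_mul, mul_one, one_div]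

lemma inner_EE {x y : ℝ} (hx : 0 < x) (hy : 0 < y) :
    (inner ℝ (EE x) (EE y) : ℝ) = 1 / (x + y) := by
  rw [MeasureTheory.L2.inner_def]
  have : ∫ t, inner ℝ (EE x t) (EE y t) ∂(volume.restrict (Ioi (0:ℝ)))
      = ∫ t in Ioi (0:ℝ), Real.exp (-((x+y) * t)) := by
    apply integral_congr_ae
    filter_upwards [EE_coe hx, EE_coe hy] with t ht1 ht2
    simp only [ht1, ht2, RCLike.inner_apply, starRingEnd_apply, star_trivial, ← Real.exp_add]
    ring_nf
  rw [this, integral_exp_neg_mul (by linarith)]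

section perterm
lemma perterm {x b0 m : ℝ} (hxb : x ≠ b0) (hxm : 0 < x + m) (hbm : 0 < b0 + m) :
    (x + b0) / ((x - b0) * (x + m))
      = (m - b0) / ((m + b0) * (x + m)) + 2 * b0 / ((x - b0) * (b0 + m)) := by
  have h1 : x - b0 ≠ 0 := sub_ne_zero.mpr hxb
  have h2 : x + m ≠ 0 := ne_of_gt hxm
  have h3 : b0 + m ≠ 0 := ne_of_gt hbm
  have h4 : m + b0 ≠ 0 := by rw [add_comm]; exact h3
  field_simp
  ring
end perterm

lemma scalarKey (a : ℝ) (ha : 0 < a) (S : Finset ℝ)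
    (hS : ∀ b ∈ S, 0 < b) (hSa : ∀ b ∈ S, b ≠ a) :
    ∃ w : ℝ → ℝ, ∀ μ : ℝ, 0 < μ →
      (∏ b ∈ S, (a + b) / (a - b)) / (a + μ) + ∑ b ∈ S, w b / (b + μ)
        = (∏ b ∈ S, (μ - b)) / ((μ + a) * ∏ b ∈ S, (μ + b)) := by
  classical
  induction S using Finset.induction_on with
  | empty =>
      refine ⟨0, fun μ hμ => ?_⟩
      simp [add_comm a μ]
  | @insert b0 S hb0S ih =>
      have hb0 : 0 < b0 := hS b0 (mem_insert_self _ _)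
      have hb0a : b0 ≠ a := hSa b0 (mem_insert_self _ _)
      obtain ⟨w, hw⟩ := ih (fun b hb => hS b (mem_insert_of_mem hb))
        (fun b hb => hSa b (mem_insert_of_mem hb))
      set P : ℝ := ∏ b ∈ S, (a + b) / (a - b) with hP
      set B : ℝ := ∑ b ∈ S, w b * (2 * b0 / (b - b0)) with hB
      refine ⟨fun b => if b = b0 then -(B + 2 * b0 * P / (a - b0))
        else w b * ((b + b0) / (b - b0)), fun μ hμ => ?_⟩
      have hab0 : a - b0 ≠ 0 := sub_ne_zero.mpr (Ne.symm hb0a)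
      have ham : (0:ℝ) < a + μ := by linarith
      have hbm : (0:ℝ) < b0 + μ := by linarith
      simp only [Finset.prod_insert hb0S, Finset.sum_insert hb0S, eq_self_iff_true,
        if_true]
      have hsum : ∑ b ∈ S, (if b = b0 then -(B + 2 * b0 * P / (a - b0))
            else w b * ((b + b0) / (b - b0))) / (b + μ)
          = (μ - b0) / (μ + b0) * (∑ b ∈ S, w b / (b + μ)) + B / (b0 + μ) := by
        rw [Finset.mul_sum, hB, Finset.sum_div, ← Finset.sum_add_distrib]
        refine Finset.sum_congr rfl fun b hb => ?_
        have hbne : b ≠ b0 := fun h => hb0S (h ▸ hb)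
        have hbpos := hS b (mem_insert_of_mem hb)
        rw [if_neg hbne]
        have hbb0 : b - b0 ≠ 0 := sub_ne_zero.mpr hbne
        have h2 : b + μ ≠ 0 := by positivity
        have h3 : b0 + μ ≠ 0 := ne_of_gt hbm
        have h4 : μ + b0 ≠ 0 := by rw [add_comm]; exact h3
        field_simp
        ring
      rw [hsum]
      have hIH := hw μ hμ
      set A : ℝ := ∑ b ∈ S, w b / (b + μ) with hA
      have hprodne : (∏ b ∈ S, (μ + b)) ≠ 0 := by
        apply Finset.prod_ne_zero_iff.mpr
        intro b hb; have := hS b (mem_insert_of_mem hb); positivity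
      have hma : μ + a ≠ 0 := by positivity
      have hmb : μ + b0 ≠ 0 := by rw [add_comm]; exact ne_of_gt hbm
      have hrhs : ((μ - b0) * ∏ b ∈ S, (μ - b)) / ((μ + a) * ((μ + b0) * ∏ b ∈ S, (μ + b)))
          = (μ - b0) / (μ + b0) * (P / (a + μ) + A) := by
        rw [hIH]
        field_simp
      rw [hrhs, ← hP]
      field_simp
      ring

/-- Distance from `EE a` to the span of finitely many other exponentials. -/
lemma distFinset (a : ℝ) (ha : 0 < a) (S : Finset ℝ)
    (hS : ∀ b ∈ S, 0 < b) (hSa : ∀ b ∈ S, b ≠ a) :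
    infDist (EE a) ((Submodule.span ℝ (EE '' (S : Set ℝ)) :
        Submodule ℝ (Lp ℝ 2 (volume.restrict (Ioi (0:ℝ))))) :
        Set (Lp ℝ 2 (volume.restrict (Ioi (0:ℝ)))))
      = (Real.sqrt (2 * a))⁻¹ * ∏ b ∈ S, |a - b| / (a + b) := by
  classical
  obtain ⟨w, hw⟩ := scalarKey a ha S hS hSa
  set H := Lp ℝ 2 (volume.restrict (Ioi (0:ℝ)))
  set V : Submodule ℝ H := Submodule.span ℝ (EE '' (S : Set ℝ)) with hV
  set c : ℝ := ∏ b ∈ S, (a + b) / (a - b) with hc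
  have hcne : c ≠ 0 := by
    rw [hc]
    apply Finset.prod_ne_zero_iff.mpr
    intro b hb
    have h1 := hS b hb
    have h2 : a - b ≠ 0 := sub_ne_zero.mpr (Ne.symm (hSa b hb))
    positivity
  set v : H := ∑ b ∈ S, w b • EE b with hv
  have hvV : v ∈ V := by
    apply Submodule.sum_mem
    intro b hb
    exact Submodule.smul_mem _ _ (Submodule.subset_span ⟨b, by simpa using hb, rfl⟩)
  set g : H := c • EE a + v with hg
  have hinner : ∀ μ : ℝ, 0 < μ → (inner ℝ g (EE μ) : ℝ)
      = (∏ b ∈ S, (μ - b)) / ((μ + a) * ∏ b ∈ S, (μ + b)) := by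
    intro μ hμ
    rw [hg, hv, inner_add_left, real_inner_smul_left, sum_inner, inner_EE ha hμ]
    rw [← hw μ hμ]
    congr 1
    · rw [hc]; ring
    · apply Finset.sum_congr rfl
      intro b hb
      rw [real_inner_smul_left, inner_EE (hS b hb) hμ]
      ring
  -- g is orthogonal to V
  have hgV : ∀ u ∈ V, (inner ℝ g u : ℝ) = 0 := by
    have : V ≤ (ℝ ∙ g)ᗮ := by
      rw [hV, Submodule.span_le]
      rintro _ ⟨b, hb, rfl⟩
      rw [SetLike.mem_coe, Submodule.mem_orthogonal_singleton_iff_inner_right]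
      rw [hinner b (hS b (by simpa using hb))]
      rw [Finset.prod_eq_zero (by simpa using hb : b ∈ S) (sub_self b)]
      simp
    intro u hu
    have := this hu
    rw [Submodule.mem_orthogonal_singleton_iff_inner_right] at this
    exact this
  have hprodm : ∀ b ∈ S, (0:ℝ) < a + b := fun b hb => by
    have := hS b hb; linarith
  have hga : (inner ℝ g (EE a) : ℝ) = (∏ b ∈ S, (a - b)) / ((a + a) * ∏ b ∈ S, (a + b)) :=
    hinner a ha
  have hgg : (inner ℝ g g : ℝ) = 1 / (2 * a) := by
    rw [hg]
    rw [inner_add_right]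
    have h1 : (inner ℝ g v : ℝ) = 0 := hgV v hvV
    rw [real_inner_smul_right, ← hg, hga, h1, add_zero]
    rw [hc]
    rw [Finset.prod_div_distrib]
    have h2 : (∏ b ∈ S, (a + b)) ≠ 0 := by
      apply Finset.prod_ne_zero_iff.mpr; intro b hb; exact ne_of_gt (hprodm b hb)
    have h3 : (∏ b ∈ S, (a - b)) ≠ 0 := by
      apply Finset.prod_ne_zero_iff.mpr; intro b hb
      exact sub_ne_zero.mpr (Ne.symm (hSa b hb))
    field_simp
    ring
  have hnormg : ‖g‖ = (Real.sqrt (2*a))⁻¹ := by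
    rw [@norm_eq_sqrt_real_inner, hgg, one_div, Real.sqrt_inv]
  -- E a = c⁻¹ • (g - v)
  have hEa : EE a = c⁻¹ • g - c⁻¹ • v := by
    rw [hg, smul_add, smul_smul, inv_mul_cancel₀ hcne, one_smul, add_sub_cancel_right]
  have hVne : ((V : Set H)).Nonempty := ⟨0, Submodule.zero_mem V⟩
  have hle : infDist (EE a) (V : Set H) ≤ ‖g‖ / |c| := by
    have hmem : -(c⁻¹ • v) ∈ (V : Set H) := by
      exact Submodule.neg_mem V (Submodule.smul_mem V _ hvV)
    calc infDist (EE a) (V : Set H) ≤ dist (EE a) (-(c⁻¹ • v)) :=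
          infDist_le_dist_of_mem hmem
    _ = ‖c⁻¹ • g‖ := by
        rw [dist_eq_norm, hEa]
        congr 1
        abel
    _ = ‖g‖ / |c| := by rw [norm_smul, norm_inv, Real.norm_eq_abs, div_eq_inv_mul]
  have hge : ‖g‖ / |c| ≤ infDist (EE a) (V : Set H) := by
    by_contra hcon
    push_neg at hcon
    rw [infDist_lt_iff hVne] at hcon
    obtain ⟨u, huV, hu⟩ := hcon
    have horth : (inner ℝ (c⁻¹ • g) (c⁻¹ • v + u) : ℝ) = 0 := by
      rw [inner_add_right, real_inner_smul_left, real_inner_smul_right, hgV v hvV,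
        real_inner_smul_left, hgV u huV]
      ring
    have hdecomp : EE a - u = c⁻¹ • g - (c⁻¹ • v + u) := by rw [hEa]; abel
    have hnorm2 : dist (EE a) u ^ 2 = ‖c⁻¹ • g‖^2 + ‖c⁻¹ • v + u‖^2 := by
      rw [dist_eq_norm, hdecomp, ← real_inner_self_eq_norm_sq, ← real_inner_self_eq_norm_sq,
        ← real_inner_self_eq_norm_sq]
      have horth2 : (inner ℝ (c⁻¹ • v + u) (c⁻¹ • g) : ℝ) = 0 := by
        rw [real_inner_comm]; exact horth
      rw [inner_sub_sub_self, horth, horth2]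
      ring
    have h1 : ‖c⁻¹ • g‖ ≤ dist (EE a) u := by
      nlinarith [norm_nonneg (c⁻¹ • v + u), norm_nonneg (c⁻¹ • g), dist_nonneg (x := EE a) (y := u)]
    have h2 : ‖c⁻¹ • g‖ = ‖g‖ / |c| := by
      rw [norm_smul, norm_inv, Real.norm_eq_abs, div_eq_inv_mul]
    linarith [h1, hu, h2 ▸ h1]
  have : infDist (EE a) (V : Set H) = ‖g‖ / |c| := le_antisymm hle hge
  rw [this, hnormg]
  rw [div_eq_mul_inv]
  congr 1
  rw [hc, Finset.abs_prod, ← Finset.prod_inv_distrib]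
  apply Finset.prod_congr rfl
  intro b hb
  rw [abs_div, abs_of_pos (hprodm b hb), abs_sub_comm]
  rw [inv_div]

lemma hasProd_exp_of_hasSum_log {ι : Type*} (f : ι → ℝ) (hf : ∀ i, 0 < f i) {L : ℝ}
    (h : HasSum (fun i => Real.log (f i)) L) : HasProd f (Real.exp L) := by
  have key : ∀ s : Finset ι, ∏ i ∈ s, f i = Real.exp (∑ i ∈ s, Real.log (f i)) := by
    intro s
    rw [Real.exp_sum]
    exact Finset.prod_congr rfl fun i _ => (Real.exp_log (hf i)).symm
  have h2 : (fun s : Finset ι => ∏ i ∈ s, f i)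
      = (Real.exp ∘ fun s : Finset ι => ∑ i ∈ s, Real.log (f i)) := funext key
  rw [HasProd, h2]
  exact (Real.continuous_exp.tendsto L).comp h

/-- The distance `d_{n,∞}` in `L²(0,∞)` from `e^{-λ_n t}` to the closed span
of the remaining exponentials: the infinite product
`∏_{k≠n} |λ_k - λ_n|/(λ_k + λ_n)` converges to a positive number and the
distance equals `(2λ_n)^{-1/2}` times this product. -/
theorem stmt5 (lam : ℕ+ → ℝ) (hpos : ∀ k : ℕ+, 0 < lam k)
    (hinj : Function.Injective lam)
    (hsum : Summable fun k : ℕ+ => 1 / lam k)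
    (F : ℕ+ → Lp ℝ 2 (volume.restrict (Ioi (0 : ℝ))))
    (hF : ∀ k : ℕ+, (F k : ℝ → ℝ) =ᵐ[volume.restrict (Ioi (0 : ℝ))]
      fun t => Real.exp (-lam k * t)) :
    ∀ n : ℕ+,
      Multipliable (fun k : {k : ℕ+ // k ≠ n} =>
        |lam k - lam n| / (lam k + lam n)) ∧
      0 < (∏' k : {k : ℕ+ // k ≠ n}, |lam k - lam n| / (lam k + lam n)) ∧
      infDist (F n)
          (closure ((Submodule.span ℝ {g | ∃ k : ℕ+, k ≠ n ∧ g = F k} :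
            Submodule ℝ (Lp ℝ 2 (volume.restrict (Ioi (0 : ℝ))))) :
            Set (Lp ℝ 2 (volume.restrict (Ioi (0 : ℝ))))))
        = (Real.sqrt (2 * lam n))⁻¹ *
            ∏' k : {k : ℕ+ // k ≠ n}, |lam k - lam n| / (lam k + lam n) := by
  intro n
  classical
  set r : {k : ℕ+ // k ≠ n} → ℝ := fun k => |lam k - lam n| / (lam k + lam n) with hr
  have hn := hpos n
  have hrpos : ∀ k, 0 < r k := by
    intro k
    have hne : lam ↑k ≠ lam n := fun h => k.2 (hinj h)
    have hk := hpos (k : ℕ+)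
    exact div_pos (abs_pos.mpr (sub_ne_zero.mpr hne)) (by linarith)
  have hrle1 : ∀ k, r k ≤ 1 := by
    intro k
    have h1 := hpos (k : ℕ+)
    rw [hr]; dsimp only
    rw [div_le_one (by linarith)]
    exact abs_le.mpr ⟨by linarith, by linarith⟩
  have hlogsum : Summable (fun k => Real.log (r k)) := by
    have hsub : Summable (fun k : {k : ℕ+ // k ≠ n} => 1 / lam k) :=
      hsum.comp_injective Subtype.coe_injective
    have htend : Tendsto (fun k : {k : ℕ+ // k ≠ n} => 1 / lam k) cofinite (nhds 0) :=
      hsub.tendsto_cofinite_zero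
    have hev : ∀ᶠ k : {k : ℕ+ // k ≠ n} in cofinite, 2 * lam n < lam k := by
      have h1 : ∀ᶠ k : {k : ℕ+ // k ≠ n} in cofinite, 1 / lam ↑k < 1 / (2 * lam n) := by
        apply htend.eventually_lt_const
        positivity
      filter_upwards [h1] with k hk
      have hk' := hpos (k : ℕ+)
      have := (div_lt_div_iff₀ hk' (by positivity : (0:ℝ) < 2 * lam n)).mp hk
      linarith
    apply summable_of_isBigO hsub
    rw [Asymptotics.isBigO_iff]
    refine ⟨4 * lam n, ?_⟩
    filter_upwards [hev] with k hk
    have hkpos := hpos (k : ℕ+)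
    have hne : lam ↑k ≠ lam n := fun h => k.2 (hinj h)
    have habs : |lam ↑k - lam n| = lam ↑k - lam n := abs_of_pos (by linarith)
    have hlog : Real.log (r k) ≤ 0 := Real.log_nonpos (le_of_lt (hrpos k)) (hrle1 k)
    have hbound : -Real.log (r k) ≤ 4 * lam n / lam ↑k := by
      rw [hr]; dsimp only
      rw [← Real.log_inv, habs, inv_div]
      have hinvpos : 0 < (lam ↑k + lam n) / (lam ↑k - lam n) :=
        div_pos (by linarith) (by linarith)
      calc Real.log ((lam ↑k + lam n) / (lam ↑k - lam n))
          ≤ (lam ↑k + lam n) / (lam ↑k - lam n) - 1 := Real.log_le_sub_one_of_pos hinvpos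
        _ = 2 * lam n / (lam ↑k - lam n) := by
            rw [div_sub_one (by intro h; rw [sub_eq_zero] at h; exact hne h)]
            ring_nf
        _ ≤ 4 * lam n / lam ↑k := by
            rw [div_le_div_iff₀ (by linarith) hkpos]
            nlinarith
    rw [Real.norm_eq_abs, Real.norm_eq_abs, abs_of_nonpos hlog,
      abs_of_pos (by positivity : (0:ℝ) < 1 / lam ↑k), mul_one_div]
    exact hbound
  set P := Real.exp (∑' k, Real.log (r k)) with hPdef
  have hprod : HasProd r P := hasProd_exp_of_hasSum_log r hrpos hlogsum.hasSum
  have hmult : Multipliable r := ⟨P, hprod⟩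
  have htprod : ∏' k, r k = P := hprod.tprod_eq
  have hPpos : 0 < P := Real.exp_pos _
  refine ⟨hmult, by rw [htprod]; exact hPpos, ?_⟩
  set Q : Finset {k : ℕ+ // k ≠ n} → ℝ := fun T => ∏ k ∈ T, r k with hQ
  have hQnn : ∀ T, 0 ≤ Q T := fun T => Finset.prod_nonneg fun k _ => (hrpos k).le
  have hQanti : Antitone Q := by
    intro T T' hTT'
    rw [hQ]; dsimp only
    rw [← Finset.prod_sdiff hTT']
    have h1 : ∏ k ∈ T' \ T, r k ≤ 1 :=
      Finset.prod_le_one (fun k _ => (hrpos k).le) (fun k _ => hrle1 k)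
    have h2 : (0:ℝ) ≤ ∏ k ∈ T, r k := Finset.prod_nonneg fun k _ => (hrpos k).le
    nlinarith [Finset.prod_nonneg (f := r) (s := T' \ T) (fun k _ => (hrpos k).le)]
  have hbdd : BddBelow (Set.range Q) := ⟨0, by rintro x ⟨T, rfl⟩; exact hQnn T⟩
  have htendsinf : Tendsto Q atTop (nhds (⨅ T, Q T)) := tendsto_atTop_ciInf hQanti hbdd
  have hPinf : P = ⨅ T, Q T := tendsto_nhds_unique hprod htendsinf
  have hFE : ∀ k : ℕ+, F k = EE (lam k) := fun k =>
    Lp.ext ((hF k).trans (EE_coe (hpos k)).symm)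
  rw [infDist_closure]
  set genSet : Set (Lp ℝ 2 (volume.restrict (Ioi (0 : ℝ)))) :=
    {g | ∃ k : ℕ+, k ≠ n ∧ g = F k} with hgen
  have key : ∀ T : Finset {k : ℕ+ // k ≠ n},
      infDist (F n) ((Submodule.span ℝ
          (EE '' ((T.image fun k => lam k.1 : Finset ℝ) : Set ℝ)) :
          Submodule ℝ (Lp ℝ 2 (volume.restrict (Ioi (0 : ℝ))))) :
          Set (Lp ℝ 2 (volume.restrict (Ioi (0 : ℝ)))))
        = (Real.sqrt (2 * lam n))⁻¹ * Q T := by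
    intro T
    have h1 : ∀ b ∈ T.image fun k => lam k.1, 0 < b := by
      intro b hb
      rw [Finset.mem_image] at hb
      obtain ⟨k, _, rfl⟩ := hb
      exact hpos k
    have h2 : ∀ b ∈ T.image fun k => lam k.1, b ≠ lam n := by
      intro b hb
      rw [Finset.mem_image] at hb
      obtain ⟨k, _, rfl⟩ := hb
      exact fun h => k.2 (hinj h)
    rw [hFE n, distFinset (lam n) (hpos n) _ h1 h2]
    congr 1
    rw [Finset.prod_image (fun x _ y _ hxy => Subtype.ext (hinj hxy))]
    exact Finset.prod_congr rfl fun k _ => by rw [abs_sub_comm, add_comm]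
  have hsubgen : ∀ T : Finset {k : ℕ+ // k ≠ n},
      EE '' ((T.image fun k => lam k.1 : Finset ℝ) : Set ℝ) ⊆ genSet := by
    intro T
    rintro _ ⟨b, hb, rfl⟩
    rw [Finset.coe_image, Set.mem_image] at hb
    obtain ⟨k, _, rfl⟩ := hb
    exact ⟨k, k.2, (hFE k).symm⟩
  have hmainle : infDist (F n) ((Submodule.span ℝ genSet :
        Submodule ℝ (Lp ℝ 2 (volume.restrict (Ioi (0 : ℝ))))) :
        Set (Lp ℝ 2 (volume.restrict (Ioi (0 : ℝ)))))
      ≤ (Real.sqrt (2 * lam n))⁻¹ * P := by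
    have htmul : Tendsto (fun T => (Real.sqrt (2 * lam n))⁻¹ * Q T) atTop
        (nhds ((Real.sqrt (2 * lam n))⁻¹ * P)) :=
      Tendsto.const_mul _ hprod
    refine ge_of_tendsto' htmul ?_
    intro T
    rw [← key T]
    exact infDist_le_infDist_of_subset
      (SetLike.coe_subset_coe.mpr (Submodule.span_mono (hsubgen T)))
      ⟨0, Submodule.zero_mem _⟩
  have hmainge : (Real.sqrt (2 * lam n))⁻¹ * P ≤ infDist (F n)
      ((Submodule.span ℝ genSet :
        Submodule ℝ (Lp ℝ 2 (volume.restrict (Ioi (0 : ℝ))))) :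
        Set (Lp ℝ 2 (volume.restrict (Ioi (0 : ℝ))))) := by
    by_contra hcon
    push_neg at hcon
    rw [infDist_lt_iff ⟨0, Submodule.zero_mem _⟩] at hcon
    obtain ⟨u, huV, hu⟩ := hcon
    rw [SetLike.mem_coe] at huV
    obtain ⟨t, htsub, htmem⟩ := Submodule.mem_span_finite_of_mem_span huV
    have hchoice : ∀ h : Lp ℝ 2 (volume.restrict (Ioi (0 : ℝ))), h ∈ t →
        ∃ k : {k : ℕ+ // k ≠ n}, h = EE (lam k.1) := by
      intro h hh
      obtain ⟨k, hk, rfl⟩ := htsub hh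
      exact ⟨⟨k, hk⟩, hFE k⟩
    choose φ hφ using hchoice
    set T : Finset {k : ℕ+ // k ≠ n} := t.attach.image (fun h => φ h.1 h.2) with hT
    have htsub2 : (t : Set (Lp ℝ 2 (volume.restrict (Ioi (0 : ℝ)))))
        ⊆ EE '' ((T.image fun k => lam k.1 : Finset ℝ) : Set ℝ) := by
      intro h hh
      rw [Finset.mem_coe] at hh
      refine ⟨lam (φ h hh).1, ?_, (hφ h hh).symm⟩
      rw [Finset.coe_image, Set.mem_image]
      refine ⟨φ h hh, ?_, rfl⟩
      rw [hT]
      rw [Finset.coe_image, Set.mem_image]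
      exact ⟨⟨h, hh⟩, Finset.mem_coe.mpr (Finset.mem_attach _ _), rfl⟩
    have humem : u ∈ Submodule.span ℝ
        (EE '' ((T.image fun k => lam k.1 : Finset ℝ) : Set ℝ)) :=
      Submodule.span_mono htsub2 (by exact_mod_cast htmem)
    have h1 : (Real.sqrt (2 * lam n))⁻¹ * Q T ≤ dist (F n) u := by
      rw [← key T]
      exact infDist_le_dist_of_mem humem
    have h2 : P ≤ Q T := by
      rw [hPinf]
      exact ciInf_le hbdd T
    have h3 := mul_le_mul_of_nonneg_left h2
      (inv_nonneg.mpr (Real.sqrt_nonneg (2 * lam n)))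
    linarith
  rw [htprod]
  exact le_antisymm hmainle hmainge
end
end

section
/- For every n ∈ ℕ⁺, the infinite product over k ∈ ℕ⁺ with k ≠ n of (k² + n²)/|k² − n²| converges and equals sinh(πn)/(πn). -/
open Real Filter Finset Nat Topology

private lemma asc6 (a : ℕ) : ∀ m : ℕ, a ! * ∏ k ∈ Finset.range m, (a + 1 + k) = (a + m)!
  | 0 => by simp
  | m + 1 => by
    rw [Finset.prod_range_succ, ← mul_assoc, asc6 a m]
    have h : a + (m + 1) = (a + m) + 1 := by omega
    rw [h, Nat.factorial_succ]
    ring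

private def w6 (n k : ℕ) : ℕ :=
  if k + 1 < n then (n - (k + 1)) * (n + (k + 1))
  else if k + 1 = n then 2 * n * n
  else ((k + 1) - n) * ((k + 1) + n)

private lemma w6_pos (n k : ℕ) (hn : 1 ≤ n) : 0 < w6 n k := by
  unfold w6
  split_ifs with h1 h2
  · exact Nat.mul_pos (by omega) (by omega)
  · positivity
  · exact Nat.mul_pos (by omega) (by omega)

private lemma w6_prod (n : ℕ) (hn : 1 ≤ n) :
    ∀ N, n ≤ N → (∏ k ∈ Finset.range N, w6 n k) = (N - n)! * (N + n)! := by
  intro N hN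
  induction N, hN using Nat.le_induction with
  | base =>
    obtain ⟨m, rfl⟩ : ∃ m, n = m + 1 := ⟨n - 1, by omega⟩
    apply Nat.eq_of_mul_eq_mul_left (Nat.factorial_pos (m + 1))
    rw [Finset.prod_range_succ]
    have hw : w6 (m + 1) m = 2 * (m + 1) * (m + 1) := by unfold w6; simp
    have hcongr : ∏ k ∈ Finset.range m, w6 (m + 1) k
        = ∏ k ∈ Finset.range m, ((m - k) * (m + 1 + 1 + k)) := by
      apply Finset.prod_congr rfl
      intro k hk
      rw [Finset.mem_range] at hk
      unfold w6
      rw [if_pos (by omega)]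
      congr 1 <;> omega
    have hrefl : ∏ k ∈ Finset.range m, (m - k) = m ! := by
      rw [← Finset.prod_range_add_one_eq_factorial m,
        ← Finset.prod_range_reflect (fun j => j + 1) m]
      apply Finset.prod_congr rfl
      intro k hk
      rw [Finset.mem_range] at hk
      omega
    rw [hcongr, Finset.prod_mul_distrib, hrefl, hw]
    have h1 : m + 1 - (m + 1) = 0 := by omega
    rw [h1, Nat.factorial_zero, one_mul]
    have h4 : (m + 1 + (m + 1))! = (m + 1 + m + 1) * ((m + 1)! * ∏ k ∈ Finset.range m, (m + 1 + 1 + k)) := by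
      rw [asc6 (m + 1) m, show m + 1 + (m + 1) = (m + 1 + m) + 1 by omega, Nat.factorial_succ]
    rw [h4, Nat.factorial_succ (m)]
    ring
  | succ N hN ih =>
    rw [Finset.prod_range_succ, ih]
    have hw : w6 n N = (N + 1 - n) * (N + 1 + n) := by
      unfold w6; rw [if_neg (by omega), if_neg (by omega)]
    have h1 : (N + 1 - n)! = (N + 1 - n) * (N - n)! := by
      rw [show N + 1 - n = (N - n) + 1 by omega, Nat.factorial_succ]
    have h2 : (N + 1 + n)! = (N + 1 + n) * (N + n)! := by
      rw [show N + 1 + n = (N + n) + 1 by omega, Nat.factorial_succ]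
    rw [hw, h1, h2]; ring

set_option maxHeartbeats 1600000 in
/-- `∏_{k≠n} (k² + n²)/|k² - n²| = sinh(πn)/(πn)`. -/
theorem stmt6 (n : ℕ+) :
    Multipliable (fun k : {k : ℕ+ // k ≠ n} =>
      ((k : ℝ) ^ 2 + (n : ℝ) ^ 2) / |(k : ℝ) ^ 2 - (n : ℝ) ^ 2|) ∧
    (∏' k : {k : ℕ+ // k ≠ n},
        ((k : ℝ) ^ 2 + (n : ℝ) ^ 2) / |(k : ℝ) ^ 2 - (n : ℝ) ^ 2|)
      = Real.sinh (π * n) / (π * n) := by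
  have hn1 : 1 ≤ (n : ℕ) := n.2
  have hnR : (0 : ℝ) < (n : ℝ) := by exact_mod_cast n.pos
  set L : ℝ := Real.sinh (π * n) / (π * n) with hLdef
  set A : ℕ → ℝ := fun j => 1 + (n : ℝ) ^ 2 / ((j : ℝ) + 1) ^ 2 with hAdef
  set Q : ℕ → ℝ := fun k => (w6 (n : ℕ) k : ℝ) / ((k : ℝ) + 1) ^ 2 with hQdef
  set g : ℕ → ℝ := fun k => A k / Q k with hgdef
  have hQpos : ∀ k, 0 < Q k := fun k =>
    div_pos (by exact_mod_cast w6_pos (n : ℕ) k hn1) (by positivity)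
  have hApos : ∀ k, 0 < A k := fun k => by positivity
  -- cast description of w6
  have hw6cast : ∀ k : ℕ, (w6 (n : ℕ) k : ℝ) =
      if k + 1 = (n : ℕ) then 2 * (n : ℝ) ^ 2
      else |((k : ℝ) + 1) ^ 2 - (n : ℝ) ^ 2| := by
    intro k
    unfold w6
    rcases lt_trichotomy (k + 1) (n : ℕ) with h | h | h
    · rw [if_pos h, if_neg (by omega)]
      have h1 : (((n : ℕ) - (k + 1) : ℕ) : ℝ) = (n : ℝ) - ((k : ℝ) + 1) := by
        push_cast [Nat.cast_sub h.le]; ring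
      have h2 : ((k : ℝ) + 1) ^ 2 - (n : ℝ) ^ 2 ≤ 0 := by
        have : ((k : ℝ) + 1) ≤ (n : ℝ) := by exact_mod_cast h.le
        nlinarith [Nat.cast_nonneg (α := ℝ) k]
      rw [abs_of_nonpos h2]
      push_cast [Nat.cast_sub h.le]
      ring
    · rw [if_neg (by omega), if_pos h, if_pos h]
      push_cast
      ring
    · rw [if_neg (by omega), if_neg (by omega), if_neg (by omega)]
      have h2 : (0:ℝ) ≤ ((k : ℝ) + 1) ^ 2 - (n : ℝ) ^ 2 := by
        have : (n : ℝ) ≤ ((k : ℝ) + 1) := by exact_mod_cast h.le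
        nlinarith [hnR.le]
      rw [abs_of_nonneg h2]
      push_cast [Nat.cast_sub (by omega : (n:ℕ) ≤ k + 1)]
      ring
  -- pointwise description of g
  have hne : ∀ k : ℕ, k + 1 ≠ (n : ℕ) → |((k : ℝ) + 1) ^ 2 - (n : ℝ) ^ 2| ≠ 0 := by
    intro k hk
    rw [abs_ne_zero, sub_ne_zero]
    intro hc
    apply hk
    have hk1 : (0:ℝ) ≤ (k : ℝ) + 1 := by positivity
    have : (k : ℝ) + 1 = (n : ℝ) := by nlinarith [hnR.le]
    exact_mod_cast this
  have hgeq : ∀ k : ℕ, g k =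
      if k + 1 = (n : ℕ) then 1
      else (((k : ℝ) + 1) ^ 2 + (n : ℝ) ^ 2) / |((k : ℝ) + 1) ^ 2 - (n : ℝ) ^ 2| := by
    intro k
    simp only [hgdef, hAdef, hQdef, hw6cast k]
    split_ifs with h
    · have hk : (k : ℝ) + 1 = (n : ℝ) := by exact_mod_cast h
      rw [← hk]
      have : ((k : ℝ) + 1) ≠ 0 := by positivity
      field_simp
      norm_num
    · have hb := hne k h
      have hc : ((k : ℝ) + 1) ^ 2 ≠ 0 := by positivity
      field_simp
  have hg1 : ∀ k, (1 : ℝ) ≤ g k := by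
    intro k
    rw [hgdef, le_div_iff₀ (hQpos k), one_mul, hQdef, div_le_iff₀ (by positivity : (0:ℝ) < ((k : ℝ) + 1) ^ 2)]
    rw [hw6cast k]
    have hAk : A k * ((k : ℝ) + 1) ^ 2 = ((k : ℝ) + 1) ^ 2 + (n : ℝ) ^ 2 := by
      rw [hAdef]; field_simp
    rw [hAk]
    split_ifs with h
    · have hk : (k : ℝ) + 1 = (n : ℝ) := by exact_mod_cast h
      rw [← hk]; ring_nf; rfl
    · rw [abs_le]
      constructor <;> nlinarith [sq_nonneg ((k:ℝ)+1), sq_nonneg (n:ℝ)]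
  -- Euler product limit for A
  have hAtend : Tendsto (fun N => ∏ j ∈ Finset.range N, A j) atTop (𝓝 L) := by
    set z : ℂ := ((n : ℝ) : ℂ) * Complex.I with hzdef
    have hc : (↑π * z) ≠ 0 := by
      simp [hzdef, Real.pi_ne_zero, Complex.I_ne_zero, Complex.ofReal_ne_zero, hnR.ne']
    have hE0 := (Complex.tendsto_euler_sin_prod z).const_mul ((↑π * z)⁻¹)
    have hE : Tendsto (fun N : ℕ => ∏ j ∈ Finset.range N, ((1 : ℂ) - z ^ 2 / ((j : ℂ) + 1) ^ 2))
        atTop (𝓝 ((↑π * z)⁻¹ * Complex.sin (↑π * z))) := by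
      apply hE0.congr
      intro N
      rw [← mul_assoc, inv_mul_cancel₀ hc, one_mul]
    have hsin : Complex.sin (↑π * z)
        = ((Real.sinh (π * (n : ℝ)) : ℝ) : ℂ) * Complex.I := by
      rw [hzdef, ← mul_assoc, ← Complex.ofReal_mul, Complex.sin_mul_I, Complex.ofReal_sinh]
    have hlim : (↑π * z)⁻¹ * Complex.sin (↑π * z)
        = ((L : ℝ) : ℂ) := by
      rw [hsin, hLdef, hzdef]
      push_cast
      field_simp [Complex.I_ne_zero, Complex.ofReal_ne_zero, Real.pi_ne_zero, hnR.ne']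
    rw [hlim] at hE
    have hprodeq : ∀ N : ℕ, (∏ j ∈ Finset.range N,
        ((1 : ℂ) - z ^ 2 / ((j : ℂ) + 1) ^ 2))
        = (((∏ j ∈ Finset.range N, A j : ℝ)) : ℂ) := by
      intro N
      rw [Complex.ofReal_prod]
      apply Finset.prod_congr rfl
      intro j _
      rw [hAdef, hzdef]
      push_cast
      rw [mul_pow, Complex.I_sq]
      ring
    have hE2 : Tendsto (fun N => (((∏ j ∈ Finset.range N, A j : ℝ)) : ℂ)) atTop (𝓝 ((L : ℝ) : ℂ)) := by
      apply hE.congr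
      intro N
      exact hprodeq N
    have h3 := (Complex.continuous_re.tendsto _).comp hE2
    have h4 : Tendsto (fun N => ((((∏ j ∈ Finset.range N, A j : ℝ)) : ℂ)).re) atTop
        (𝓝 (((L : ℝ) : ℂ)).re) := h3
    simp only [Complex.ofReal_re] at h4
    exact h4
  -- product formula for Q
  have hQprod : ∀ N, (n : ℕ) ≤ N → ∏ k ∈ Finset.range N, Q k
      = (((N - (n:ℕ))! * (N + (n:ℕ))! : ℕ) : ℝ) / ((N ! : ℕ) : ℝ) ^ 2 := by
    intro N hN
    simp only [hQdef]
    rw [Finset.prod_div_distrib]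
    congr 1
    · rw [← Nat.cast_prod, w6_prod (n : ℕ) hn1 N hN]
    · rw [← Finset.prod_range_add_one_eq_factorial N, Nat.cast_prod, ← Finset.prod_pow]
      push_cast
      rfl
  -- limit of Q partial products is 1
  have hQtend : Tendsto (fun N => ∏ k ∈ Finset.range N, Q k) atTop (𝓝 1) := by
    have hfac : ∀ j : ℕ, Tendsto (fun N : ℕ => ((N : ℝ) + 1 + j) / ((N : ℝ) - (n : ℝ) + 1 + j))
        atTop (𝓝 1) := by
      intro j
      have hreal : Tendsto (fun x : ℝ => (x + 1 + j) / (x - (n : ℝ) + 1 + j)) atTop (𝓝 1) := by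
        have hd : Tendsto (fun x : ℝ => x - (n : ℝ) + 1 + j) atTop atTop := by
          apply tendsto_atTop_add_const_right
          apply tendsto_atTop_add_const_right
          exact tendsto_atTop_add_const_right _ _ tendsto_id
        have hsmall : Tendsto (fun x : ℝ => (n : ℝ) / (x - (n : ℝ) + 1 + j)) atTop (𝓝 0) :=
          Filter.Tendsto.const_div_atTop hd _
        have h1 : Tendsto (fun x : ℝ => 1 + (n : ℝ) / (x - (n : ℝ) + 1 + j)) atTop (𝓝 1) := by
          simpa using tendsto_const_nhds.add hsmall
        apply h1.congr'
        filter_upwards [eventually_gt_atTop ((n : ℝ))] with x hx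
        have hne0 : x - (n : ℝ) + 1 + j ≠ 0 := by
          have hj : (0:ℝ) ≤ (j : ℝ) := Nat.cast_nonneg j
          nlinarith
        field_simp
        ring
      exact hreal.comp tendsto_natCast_atTop_atTop
    have hprod1 : Tendsto (fun N : ℕ => ∏ j ∈ Finset.range (n : ℕ),
        (((N : ℝ) + 1 + j) / ((N : ℝ) - (n : ℝ) + 1 + j))) atTop (𝓝 1) := by
      have := tendsto_finset_prod (Finset.range (n : ℕ))
        (fun j (_ : j ∈ Finset.range (n : ℕ)) => hfac j)
      simpa using this
    apply hprod1.congr'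
    filter_upwards [eventually_ge_atTop (n : ℕ)] with N hN
    have hN1 : ((N ! : ℕ) : ℝ) ≠ 0 := Nat.cast_ne_zero.mpr (Nat.factorial_ne_zero N)
    have hNn : (((N - (n:ℕ))! : ℕ) : ℝ) ≠ 0 := Nat.cast_ne_zero.mpr (Nat.factorial_ne_zero _)
    have e1 : (((N + (n:ℕ))! : ℕ) : ℝ) = ((N ! : ℕ) : ℝ) * ∏ j ∈ Finset.range (n : ℕ), ((N : ℝ) + 1 + j) := by
      exact_mod_cast (asc6 N (n : ℕ)).symm
    have hsub : (((N - (n:ℕ)) : ℕ) : ℝ) = (N : ℝ) - (n : ℝ) := by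
      push_cast [Nat.cast_sub hN]
      ring
    have e2 : ((N ! : ℕ) : ℝ) = (((N - (n:ℕ))! : ℕ) : ℝ) * ∏ j ∈ Finset.range (n : ℕ), ((N : ℝ) - (n : ℝ) + 1 + j) := by
      have h := asc6 (N - (n : ℕ)) (n : ℕ)
      rw [Nat.sub_add_cancel hN] at h
      have h' : ((N ! : ℕ) : ℝ) = (((N - (n:ℕ))! : ℕ) : ℝ)
          * ∏ j ∈ Finset.range (n : ℕ), ((((N - (n:ℕ)) : ℕ) : ℝ) + 1 + j) := by
        exact_mod_cast h.symm
      simp only [hsub] at h'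
      exact h'
    have hden : (∏ j ∈ Finset.range (n : ℕ), ((N : ℝ) - (n : ℝ) + 1 + j)) ≠ 0 := by
      intro h0
      rw [h0, mul_zero] at e2
      exact hN1 e2
    rw [hQprod N hN, Finset.prod_div_distrib, Nat.cast_mul,
      div_eq_div_iff hden (by positivity : ((N ! : ℕ) : ℝ) ^ 2 ≠ 0), e1, e2]
    ring
  -- limit of g partial products
  have hgtend : Tendsto (fun N => ∏ k ∈ Finset.range N, g k) atTop (𝓝 L) := by
    have h := hAtend.div hQtend one_ne_zero
    simp only [div_one] at h
    apply h.congr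
    intro N
    simp [hgdef, Finset.prod_div_distrib]
  -- HasProd via monotone convergence
  have hmono : Monotone (fun s : Finset ℕ => ∏ i ∈ s, g i) := by
    intro s t hst
    have hone : (1 : ℝ) ≤ ∏ i ∈ t \ s, g i := by
      calc (1:ℝ) = ∏ _i ∈ t \ s, (1:ℝ) := (Finset.prod_const_one).symm
        _ ≤ ∏ i ∈ t \ s, g i :=
          Finset.prod_le_prod (fun i _ => zero_le_one) (fun i _ => hg1 i)
    have hnn : (0:ℝ) ≤ ∏ i ∈ s, g i :=
      Finset.prod_nonneg fun i _ => le_trans zero_le_one (hg1 i)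
    calc ∏ i ∈ s, g i ≤ (∏ i ∈ t \ s, g i) * ∏ i ∈ s, g i := le_mul_of_one_le_left hnn hone
      _ = ∏ i ∈ t, g i := Finset.prod_sdiff hst
  have hbdd : BddAbove (Set.range (fun s : Finset ℕ => ∏ i ∈ s, g i)) := by
    refine ⟨L, ?_⟩
    rintro x ⟨s, rfl⟩
    obtain ⟨N, hsN⟩ := Finset.exists_nat_subset_range s
    have hm2 : Monotone (fun N : ℕ => ∏ i ∈ Finset.range N, g i) :=
      fun a b hab => hmono (Finset.range_subset_range.mpr hab)
    calc ∏ i ∈ s, g i ≤ ∏ i ∈ Finset.range N, g i := hmono hsN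
      _ ≤ L := hm2.ge_of_tendsto hgtend N
  have hHP : HasProd g L := by
    have ht : HasProd g (⨆ s : Finset ℕ, ∏ i ∈ s, g i) := tendsto_atTop_ciSup hmono hbdd
    have heq : (⨆ s : Finset ℕ, ∏ i ∈ s, g i) = L :=
      tendsto_nhds_unique ht.tendsto_prod_nat hgtend
    rwa [heq] at ht
  -- transfer to the subtype
  set f : ℕ+ → ℝ := fun k => ((k : ℝ) ^ 2 + (n : ℝ) ^ 2) / |(k : ℝ) ^ 2 - (n : ℝ) ^ 2| with hfdef
  have hcomp : (Set.mulIndicator {k : ℕ+ | k ≠ n} f) ∘ (Equiv.pnatEquivNat.symm) = g := by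
    funext m
    have hm : (Equiv.pnatEquivNat.symm m : ℕ+) = Nat.succPNat m := rfl
    rw [Function.comp_apply, hm, Set.mulIndicator_apply, hgeq m]
    have hmem : (Nat.succPNat m ∈ {k : ℕ+ | k ≠ n}) ↔ ¬(m + 1 = (n : ℕ)) := by
      simp only [Set.mem_setOf_eq, ne_eq, not_iff_not]
      rw [← PNat.coe_inj, Nat.succPNat_coe]
    by_cases h : m + 1 = (n : ℕ)
    · rw [if_neg (by rw [hmem]; simp [h]), if_pos h]
    · rw [if_pos (hmem.mpr h), if_neg h, hfdef]
      have hcast : ((Nat.succPNat m : ℕ+) : ℝ) = (m : ℝ) + 1 := by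
        rw [Nat.succPNat_coe]
        push_cast
        ring
      simp only [hcast]
  have hind : HasProd (Set.mulIndicator {k : ℕ+ | k ≠ n} f) L := by
    rw [← Equiv.hasProd_iff (Equiv.pnatEquivNat.symm)]
    rw [hcomp]
    exact hHP
  have key : HasProd (fun k : {k : ℕ+ // k ≠ n} => f k) L :=
    hasProd_subtype_iff_mulIndicator.mpr hind
  exact ⟨key.multipliable, key.tprod_eq⟩
end

section
/- For every n ∈ ℕ⁺, the infinite product over k ∈ ℕ⁺ with k ≠ n of |1 − n²/k²| converges and equals 1/2. -/
open Filter Finset Real Topology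


lemma fact_prod_aux (a m : ℕ) :
    (a + m).factorial = a.factorial * ∏ j ∈ range m, (a + j + 1) := by
  induction m with
  | zero => simp
  | succ m ih =>
      rw [show a + (m+1) = (a+m)+1 by ring, Nat.factorial_succ, ih, prod_range_succ]
      ring

lemma lemA (N m : ℕ) (hm : m < N) :
    ∏ k ∈ Icc 1 m, |1 - (N:ℝ)^2 / (k:ℝ)^2|
      = ((N-1).factorial : ℝ) * ((N+m).factorial : ℝ) /
        (((N-1-m).factorial : ℝ) * (N.factorial : ℝ) * ((m.factorial : ℝ))^2) := by
  induction m with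
  | zero =>
      simp only [Icc_self, Nat.sub_zero, Nat.add_zero, Nat.factorial_zero]
      rw [show Icc 1 0 = (∅ : Finset ℕ) by rfl]
      simp
      rw [div_self]
      positivity
  | succ m ih =>
      have hm' : m < N := by omega
      obtain ⟨d, rfl⟩ : ∃ d, N = m + 2 + d := ⟨N - m - 2, by omega⟩
      rw [prod_Icc_succ_top (by omega), ih hm']
      have e1 : m + 2 + d - 1 - m = d + 1 := by omega
      have e2 : m + 2 + d - 1 - (m+1) = d := by omega
      have e3 : (m + 2 + d - 1) = m + 1 + d := by omega
      have e4 : m + 2 + d + (m + 1) = (m + 2 + d + m) + 1 := by ring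
      rw [e1, e2, e3, e4, Nat.factorial_succ (m+2+d+m), Nat.factorial_succ (m),
        Nat.factorial_succ d]
      have hle : 1 - ((m+2+d:ℕ):ℝ)^2 / ((m+1:ℕ):ℝ)^2 ≤ 0 := by
        rw [sub_nonpos, one_le_div (by positivity : (0:ℝ) < ((m+1:ℕ):ℝ)^2)]
        push_cast
        nlinarith [Nat.cast_nonneg (α := ℝ) m, Nat.cast_nonneg (α := ℝ) d]
      have habs : |1 - ((m+2+d:ℕ):ℝ)^2 / ((m+1:ℕ):ℝ)^2|
          = (((m+2+d:ℕ):ℝ)^2 - ((m+1:ℕ):ℝ)^2) / ((m+1:ℕ):ℝ)^2 := by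
        rw [abs_of_nonpos hle, sub_div, div_self (by positivity : ((m+1:ℕ):ℝ)^2 ≠ 0)]
        ring
      rw [habs]
      have hd : (0:ℝ) < d.factorial := by positivity
      have hmf : (0:ℝ) < m.factorial := by positivity
      field_simp
      push_cast
      ring




lemma lemC (N : ℕ) (hN : 1 ≤ N) (K : ℕ) (hK : N ≤ K) :
    ∏ k ∈ (Icc 1 K).filter (· ≠ N), |1 - (N:ℝ)^2 / (k:ℝ)^2|
      = ((K+N).factorial : ℝ) * ((K-N).factorial : ℝ) / (2 * ((K.factorial : ℝ))^2) := by
  induction K, hK using Nat.le_induction with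
  | base =>
      have hfil : (Icc 1 N).filter (· ≠ N) = Icc 1 (N-1) := by
        ext x; simp only [mem_filter, mem_Icc]; omega
      rw [hfil, lemA N (N-1) (by omega)]
      obtain ⟨p, rfl⟩ : ∃ p, N = p + 1 := ⟨N - 1, by omega⟩
      have e1 : p + 1 - 1 = p := by omega
      have e2 : p - p = 0 := by omega
      have e3 : p + 1 + p = 2*p + 1 := by omega
      have e4 : p + 1 + (p + 1) = (2*p+1) + 1 := by ring
      have e5 : p + 1 - (p + 1) = 0 := by omega
      rw [e1, e2, e3, e4, e5, Nat.factorial_succ (2*p+1), Nat.factorial_succ p,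
        Nat.factorial_zero]
      have h1 : (0:ℝ) < p.factorial := by positivity
      have h2 : (0:ℝ) < (2*p+1).factorial := by positivity
      field_simp
      push_cast
      ring
  | succ K hK ih =>
      have hfil : (Icc 1 (K+1)).filter (· ≠ N) =
          insert (K+1) ((Icc 1 K).filter (· ≠ N)) := by
        ext x; simp only [mem_filter, mem_Icc, mem_insert]; omega
      have hnm : (K+1) ∉ (Icc 1 K).filter (· ≠ N) := by
        simp only [mem_filter, mem_Icc]; omega
      rw [hfil, prod_insert hnm, ih]
      obtain ⟨d, rfl⟩ : ∃ d, K = N + d := ⟨K - N, by omega⟩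
      have e1 : N + d - N = d := by omega
      have e2 : N + d + 1 - N = d + 1 := by omega
      have e3 : N + d + 1 + N = (N + d + N) + 1 := by ring
      rw [e1, e2, e3, Nat.factorial_succ (N+d+N), Nat.factorial_succ (N+d),
        Nat.factorial_succ d]
      have habs : |1 - (N:ℝ)^2 / ((N+d+1:ℕ):ℝ)^2|
          = 1 - (N:ℝ)^2 / ((N+d+1:ℕ):ℝ)^2 := by
        rw [abs_of_nonneg]
        rw [sub_nonneg]
        rw [div_le_one (by positivity : (0:ℝ) < ((N+d+1:ℕ):ℝ)^2)]
        push_cast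
        nlinarith [Nat.cast_nonneg (α := ℝ) N, Nat.cast_nonneg (α := ℝ) d]
      rw [habs]
      have h1 : (0:ℝ) < (N+d).factorial := by positivity
      have h2 : (0:ℝ) < (N+d+N).factorial := by positivity
      have h3 : (0:ℝ) < d.factorial := by positivity
      have h4 : (0:ℝ) < ((N+d+1:ℕ):ℝ) := by positivity
      field_simp
      push_cast
      ring

lemma limC (N : ℕ) (hN : 1 ≤ N) :
    Tendsto (fun K : ℕ => ((K+N).factorial : ℝ) * ((K-N).factorial : ℝ)
        / (2 * ((K.factorial : ℝ))^2)) atTop (𝓝 (1/2)) := by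
  have hG : Tendsto (fun K : ℕ => (1/2 : ℝ) * ∏ j ∈ range N,
      (((K:ℝ)+j+1) / ((K:ℝ)-N+j+1))) atTop (𝓝 ((1/2) * ∏ j ∈ range N, (1:ℝ))) := by
    apply Tendsto.const_mul
    apply tendsto_finset_prod
    intro j _
    have hden : Tendsto (fun K : ℕ => (K:ℝ) - N + j + 1) atTop atTop := by
      have := tendsto_natCast_atTop_atTop (R := ℝ)
      exact tendsto_atTop_add_const_right atTop (-(N:ℝ) + j + 1)
        (by simpa using this) |>.congr (fun K => by ring)
    have h0 : Tendsto (fun K : ℕ => (N:ℝ) / ((K:ℝ) - N + j + 1)) atTop (𝓝 0) :=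
      Tendsto.div_atTop tendsto_const_nhds hden
    have : Tendsto (fun _ : ℕ => (1:ℝ)) atTop (𝓝 1) := tendsto_const_nhds
    have := this.add h0
    rw [add_zero] at this
    apply this.congr'
    filter_upwards [eventually_ge_atTop N] with K hK
    have hpos : (0:ℝ) < (K:ℝ) - N + j + 1 := by
      have : (N:ℝ) ≤ K := by exact_mod_cast hK
      have : (0:ℝ) ≤ (j:ℝ) := Nat.cast_nonneg j
      linarith
    field_simp
    ring
  rw [prod_const_one, mul_one] at hG
  apply hG.congr'
  filter_upwards [eventually_ge_atTop N] with K hK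
  obtain ⟨d, rfl⟩ : ∃ d, K = N + d := ⟨K - N, by omega⟩
  have e1 : N + d - N = d := by omega
  have h1 : ((N + d).factorial : ℝ) = (d.factorial : ℝ) * ∏ j ∈ range N, ((d:ℝ)+j+1) := by
    rw [add_comm N d, fact_prod_aux d N]
    push_cast; ring
  have h2 : ((N + d + N).factorial : ℝ)
      = ((N+d).factorial : ℝ) * ∏ j ∈ range N, ((N:ℝ)+(d:ℝ)+j+1) := by
    rw [fact_prod_aux (N+d) N]
    push_cast; ring
  have hrat : ∏ j ∈ range N, (((N+d:ℕ):ℝ)+j+1) / (((N+d:ℕ):ℝ)-N+j+1)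
      = (∏ j ∈ range N, ((N:ℝ)+(d:ℝ)+j+1)) / (∏ j ∈ range N, ((d:ℝ)+j+1)) := by
    rw [prod_div_distrib]
    congr 1 <;> apply prod_congr rfl <;> intro j _ <;> push_cast <;> ring
  rw [e1, hrat, h2, h1]
  have p1 : (0:ℝ) < ∏ j ∈ range N, ((d:ℝ)+j+1) := by
    apply prod_pos; intro j _; positivity
  have p2 : (0:ℝ) < (d.factorial : ℝ) := by positivity
  field_simp


lemma sumlog (N : ℕ) (hN : 1 ≤ N) :
    Summable (fun m : ℕ => Real.log |1 - (N:ℝ)^2 / ((m:ℝ)+1)^2|) := by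
  apply Summable.of_norm_bounded_eventually_nat (g := fun m => 2*(N:ℝ)^2 * (1/((m:ℝ)+1)^2))
  · apply Summable.mul_left
    have base : Summable (fun m : ℕ => 1/((m:ℝ))^2) :=
      Real.summable_one_div_nat_pow.mpr one_lt_two
    have := (summable_nat_add_iff 1).mpr base
    apply this.congr
    intro m; push_cast; ring
  · filter_upwards [eventually_ge_atTop (2*N)] with m hm
    set x : ℝ := (m:ℝ)+1 with hx
    have hxpos : (0:ℝ) < x := by positivity
    have hx2N : (2*N : ℝ) ≤ x := by
      have : (2*N : ℝ) ≤ (m:ℝ) := by exact_mod_cast hm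
      linarith
    set t : ℝ := (N:ℝ)^2 / x^2 with ht
    have htpos : 0 < t := by positivity
    have hthalf : t ≤ 1/2 := by
      rw [ht, div_le_iff₀ (by positivity)]
      have hN1 : (1:ℝ) ≤ N := by exact_mod_cast hN
      nlinarith
    have h1t : (1:ℝ)/2 ≤ 1 - t := by linarith
    have habs : |1 - t| = 1 - t := abs_of_nonneg (by linarith)
    rw [habs]
    have hlog_nonpos : Real.log (1 - t) ≤ 0 :=
      Real.log_nonpos (by linarith) (by linarith)
    rw [Real.norm_eq_abs, abs_of_nonpos hlog_nonpos]
    have hinv : -Real.log (1 - t) = Real.log (1 - t)⁻¹ := by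
      rw [Real.log_inv]
    rw [hinv]
    have hle : Real.log (1-t)⁻¹ ≤ (1-t)⁻¹ - 1 :=
      Real.log_le_sub_one_of_pos (by positivity)
    have hinvle : (1-t)⁻¹ ≤ 2 := by
      rw [show (2:ℝ) = ((1:ℝ)/2)⁻¹ by norm_num]
      exact inv_anti₀ (by norm_num) h1t
    have : (1-t)⁻¹ - 1 ≤ 2 * t := by
      have heq : (1-t)⁻¹ - 1 = t * (1-t)⁻¹ := by
        field_simp
        ring
      rw [heq]
      calc t * (1-t)⁻¹ ≤ t * 2 := by
            apply mul_le_mul_of_nonneg_left hinvle (le_of_lt htpos)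
        _ = 2 * t := by ring
    calc Real.log (1-t)⁻¹ ≤ (1-t)⁻¹ - 1 := hle
      _ ≤ 2*t := this
      _ = 2*(N:ℝ)^2 * (1/x^2) := by rw [ht]; ring


/-- `∏_{k≠n} |1 - n²/k²| = 1/2`. -/
theorem stmt7 (n : ℕ+) :
    Multipliable (fun k : {k : ℕ+ // k ≠ n} =>
      |1 - (n : ℝ) ^ 2 / (k : ℝ) ^ 2|) ∧
    (∏' k : {k : ℕ+ // k ≠ n}, |1 - (n : ℝ) ^ 2 / (k : ℝ) ^ 2|)
      = 1 / 2 := by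
  set N : ℕ := (n : ℕ) with hNdef
  have hN : 1 ≤ N := n.pos
  set f : {k : ℕ+ // k ≠ n} → ℝ :=
    fun k => |1 - (n : ℝ) ^ 2 / (k : ℝ) ^ 2| with hf
  -- positivity of each factor
  have hpos : ∀ x : {k : ℕ+ // k ≠ n}, 0 < f x := by
    intro x
    rw [hf, abs_pos]
    intro h
    have hx0 : ((x : ℕ+) : ℝ) ≠ 0 := by
      have := (x : ℕ+).pos
      positivity
    have h2 : ((n:ℕ+) : ℝ)^2 = ((x : ℕ+) : ℝ)^2 := by
      field_simp at h
      linarith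
    have h3 : ((n:ℕ+) : ℕ)^2 = ((x : ℕ+) : ℕ)^2 := by exact_mod_cast h2
    have h4 : ((n:ℕ+) : ℕ) = ((x : ℕ+) : ℕ) :=
      Nat.pow_left_injective (by norm_num) h3
    exact x.2 (PNat.coe_injective h4.symm)
  -- multipliability
  have hsum2 : Summable (fun k : ℕ+ => Real.log |1 - (N:ℝ)^2 / ((k:ℕ):ℝ)^2|) := by
    rw [← (Equiv.pnatEquivNat.symm.summable_iff
      (f := fun k : ℕ+ => Real.log |1 - (N:ℝ)^2 / ((k:ℕ):ℝ)^2|))]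
    apply (sumlog N hN).congr
    intro m
    simp only [Function.comp, Equiv.pnatEquivNat, Equiv.coe_fn_symm_mk,
      Nat.succPNat_coe]
    push_cast
    ring_nf
  have hsum3 : Summable (fun x : {k : ℕ+ // k ≠ n} => Real.log (f x)) := by
    have := hsum2.comp_injective (Subtype.val_injective (p := fun k : ℕ+ => k ≠ n))
    apply this.congr
    intro x
    rfl
  have hmult : Multipliable f := by
    have hp := hsum3.hasSum.rexp
    exact hp.multipliable.congr (fun x => Real.exp_log (hpos x))
  refine ⟨hmult, ?_⟩
  -- the exhausting sequence of finsets
  set s : ℕ → Finset {k : ℕ+ // k ≠ n} :=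
    fun K => (Icc 1 (Nat.succPNat K)).subtype (fun k => k ≠ n) with hs
  have hmono : Monotone s := by
    apply monotone_nat_of_le_succ
    intro K
    apply Finset.subtype_mono
    apply Finset.Icc_subset_Icc le_rfl
    rw [← PNat.coe_le_coe]
    simp
  have hexh : ∀ x : {k : ℕ+ // k ≠ n}, ∃ K, x ∈ s K := by
    intro x
    refine ⟨((x : ℕ+) : ℕ), ?_⟩
    rw [hs, Finset.mem_subtype]
    rw [Finset.mem_Icc]
    constructor
    · exact (x : ℕ+).one_le
    · rw [← PNat.coe_le_coe]
      simp
  have htend : Tendsto s atTop atTop := tendsto_atTop_finset_of_monotone hmono hexh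
  have key : Tendsto (fun K => ∏ x ∈ s K, f x) atTop (𝓝 (∏' x, f x)) :=
    hmult.hasProd.comp htend
  -- the bridge to ℕ products
  have bridge : ∀ K : ℕ, ∏ x ∈ s K, f x
      = ∏ m ∈ (Icc 1 (K+1)).filter (· ≠ N), |1 - (N:ℝ)^2 / (m:ℝ)^2| := by
    intro K
    rw [hs]
    rw [Finset.prod_subtype_eq_prod_filter
      (fun k : ℕ+ => |1 - ((N:ℕ):ℝ)^2 / ((k:ℕ):ℝ)^2|) (p := fun k => k ≠ n)]
    apply Finset.prod_nbij' (fun k : ℕ+ => (k : ℕ)) (fun m : ℕ => m.toPNat')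
    · intro a ha
      simp only [Finset.mem_filter, Finset.mem_Icc] at ha ⊢
      obtain ⟨⟨h1, h2⟩, h3⟩ := ha
      refine ⟨⟨a.one_le, ?_⟩, ?_⟩
      · rw [← PNat.coe_le_coe] at h2; exact h2
      · intro h; exact h3 (PNat.coe_injective h)
    · intro m hm
      simp only [Finset.mem_filter, Finset.mem_Icc] at hm ⊢
      obtain ⟨⟨h1, h2⟩, h3⟩ := hm
      constructor
      constructor
      · exact m.toPNat'.one_le
      · rw [← PNat.coe_le_coe]
        have : ((m.toPNat' : ℕ+) : ℕ) = m := by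
          simp [Nat.toPNat', Nat.succPNat]
          omega
        rw [this]
        exact h2
      · intro h
        apply h3
        have : ((m.toPNat' : ℕ+) : ℕ) = m := by
          simp [Nat.toPNat', Nat.succPNat]
          omega
        rw [← this, h]
    · intro a ha
      simp only [Finset.mem_filter, Finset.mem_Icc] at ha
      apply PNat.coe_injective
      simp [Nat.toPNat', Nat.succPNat]
      exact Nat.succ_pred_eq_of_pos a.property
    · intro m hm
      simp only [Finset.mem_filter, Finset.mem_Icc] at hm
      simp [Nat.toPNat', Nat.succPNat]
      omega
    · intro a ha
      rfl
  have key2 : Tendsto (fun K => ∏ x ∈ s K, f x) atTop (𝓝 (1/2)) := by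
    have hlim := (limC N hN).comp (tendsto_add_atTop_nat 1)
    apply hlim.congr'
    filter_upwards [eventually_ge_atTop N] with K hK
    rw [bridge K, lemC N hN (K+1) (by omega)]
    rfl
  exact tendsto_nhds_unique key key2
end

section
/- Let α > 0. There exists a Borel set Γ_α ⊆ (0,1) of full Lebesgue measure, consisting entirely of irrational numbers, such that for every p ∈ Γ_α there exists a constant C_{α,p} > 0 with |sin(π n p)| ≥ C_{α,p} e^{−α π² n²} for all n ∈ ℕ⁺. -/
open Real MeasureTheory

/-- For every `α > 0` there is a Borel set `Γ_α ⊆ (0,1)` of full Lebesgue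
measure, consisting of irrationals, on which
`|sin(πnp)| ≥ C_{α,p} e^{-απ²n²}` for all `n ∈ ℕ⁺`. -/
theorem stmt13 (α : ℝ) (hα : 0 < α) :
    ∃ Γ : Set ℝ, MeasurableSet Γ ∧ Γ ⊆ Set.Ioo (0 : ℝ) 1 ∧
      volume (Set.Ioo (0 : ℝ) 1 \ Γ) = 0 ∧
      (∀ p ∈ Γ, Irrational p) ∧
      (∀ p ∈ Γ, ∃ C : ℝ, 0 < C ∧
        ∀ n : ℕ+,
          C * Real.exp (-α * π ^ 2 * (n : ℝ) ^ 2)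
            ≤ |Real.sin (π * (n : ℝ) * p)|) := by
  -- the small scales
  set ε : ℕ → ℝ := fun n => Real.exp (-α * π ^ 2 * (n : ℝ) ^ 2) with hε
  have hεpos : ∀ n, 0 < ε n := fun n => Real.exp_pos _
  have hεlt1 : ∀ n : ℕ, 1 ≤ n → ε n < 1 := by
    intro n hn
    apply Real.exp_lt_one_iff.mpr
    have h1 : (1:ℝ) ≤ (n:ℝ) := by exact_mod_cast hn
    have : (0:ℝ) < α * π ^ 2 * (n:ℝ) ^ 2 := by positivity
    linarith
  -- the bad sets (E k corresponds to frequency k+1)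
  set E : ℕ → Set ℝ := fun k =>
    ⋃ m ∈ Finset.range (k + 2), Metric.ball ((m : ℝ) / (k + 1)) (ε (k + 1) / (k + 1)) with hE
  have hEmeas : ∀ k, MeasurableSet (E k) := by
    intro k
    exact (Finset.range (k+2)).measurableSet_biUnion (fun m _ => measurableSet_ball)
  -- measure bound
  have hEvol : ∀ k, volume (E k) ≤ ENNReal.ofReal (4 * ε (k + 1)) := by
    intro k
    calc volume (E k) ≤ ∑ m ∈ Finset.range (k + 2),
          volume (Metric.ball ((m : ℝ) / (k + 1)) (ε (k + 1) / (k + 1))) :=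
        measure_biUnion_finset_le _ _
      _ = (k + 2 : ℕ) * ENNReal.ofReal (2 * (ε (k + 1) / ((k : ℝ) + 1))) := by
          simp [Real.volume_ball, Finset.sum_const, nsmul_eq_mul]
      _ ≤ ENNReal.ofReal (4 * ε (k + 1)) := by
          rw [← ENNReal.ofReal_natCast (k + 2), ← ENNReal.ofReal_mul (by positivity)]
          apply ENNReal.ofReal_le_ofReal
          have h2 : (0:ℝ) < (k:ℝ) + 1 := by positivity
          have h3 : ((k + 2 : ℕ) : ℝ) * (2 * (ε (k + 1) / ((k : ℝ) + 1)))
              = (((k:ℝ) + 2) * 2 / ((k:ℝ) + 1)) * ε (k + 1) := by push_cast; ring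
          rw [h3]
          have h4 : ((k:ℝ) + 2) * 2 / ((k:ℝ) + 1) ≤ 4 := by
            rw [div_le_iff₀ h2]; linarith
          exact mul_le_mul_of_nonneg_right h4 (hεpos _).le
  -- summability
  have hsum0 : Summable ε := by
    rw [hε]
    apply Summable.of_nonneg_of_le (f := fun n => Real.exp (-(α * π ^ 2)) ^ n)
      (fun n => (Real.exp_pos _).le)
    · intro n
      rw [← Real.exp_nat_mul]
      apply Real.exp_le_exp.mpr
      have h1 : (n:ℝ) ≤ (n:ℝ) ^ 2 := by
        have := Nat.le_self_pow (two_ne_zero) n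
        exact_mod_cast this
      have h2 : (0:ℝ) < α * π ^ 2 := by positivity
      nlinarith
    · exact summable_geometric_of_lt_one (Real.exp_pos _).le
        (Real.exp_lt_one_iff.mpr (by
          have h : (0:ℝ) < α * π ^ 2 := by positivity
          linarith))
  have hsum : Summable (fun k => 4 * ε (k + 1)) :=
    ((summable_nat_add_iff 1).mpr hsum0).mul_left 4
  -- Borel–Cantelli
  have hlimsup : volume (Filter.limsup E Filter.atTop) = 0 := by
    apply MeasureTheory.measure_limsup_atTop_eq_zero
    apply ne_top_of_le_ne_top _ (ENNReal.tsum_le_tsum hEvol)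
    rw [← ENNReal.ofReal_tsum_of_nonneg (fun k => by positivity) hsum]
    exact ENNReal.ofReal_ne_top
  -- the good set
  refine ⟨Set.Ioo 0 1 ∩ (Set.range ((↑) : ℚ → ℝ))ᶜ ∩ (Filter.limsup E Filter.atTop)ᶜ,
    ((measurableSet_Ioo.inter (Set.countable_range _).measurableSet.compl).inter
      (MeasurableSet.measurableSet_limsup hEmeas).compl),
    fun p hp => hp.1.1, ?_, fun p hp => hp.1.2, ?_⟩
  · -- null complement
    refine measure_mono_null (fun p hp => ?_)
      (measure_union_null ((Set.countable_range ((↑) : ℚ → ℝ)).measure_zero _) hlimsup)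
    simp only [Set.mem_diff, Set.mem_inter_iff, Set.mem_compl_iff] at hp
    by_cases h1 : p ∈ Set.range ((↑) : ℚ → ℝ)
    · exact Or.inl h1
    · right
      by_contra h2
      exact hp.2 ⟨⟨hp.1, h1⟩, h2⟩
  · -- the quantitative bound
    rintro p ⟨⟨hp01, hpratc⟩, hplim⟩
    have hpirr : Irrational p := hpratc
    rw [Set.mem_compl_iff, Filter.mem_limsup_iff_frequently_mem,
      Filter.not_frequently] at hplim
    obtain ⟨N, hN⟩ := Filter.eventually_atTop.mp hplim
    -- for n ≥ N + 1, the quantitative distance bound holds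
    have key : ∀ n : ℕ, N + 1 ≤ n → ε n ≤ |Real.sin (π * (n : ℝ) * p)| := by
      intro n hn
      have hn1 : 1 ≤ n := le_trans (Nat.le_add_left 1 N) hn
      obtain ⟨k, rfl⟩ : ∃ k, n = k + 1 := ⟨n - 1, by omega⟩
      have hc : ((k + 1 : ℕ) : ℝ) = (k:ℝ) + 1 := by push_cast; ring
      rw [hc]
      obtain ⟨m, hm⟩ : ∃ m : ℤ, m = round (((k:ℝ) + 1) * p) := ⟨_, rfl⟩
      have hd2 : |((k:ℝ) + 1) * p - m| ≤ 1/2 := by rw [hm]; exact abs_sub_round _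
      have hq : (0:ℝ) < (k:ℝ) + 1 := by positivity
      have hdlb : ε (k + 1) ≤ |((k:ℝ) + 1) * p - m| := by
        by_contra hcon
        push_neg at hcon
        apply hN k (by omega)
        have hε1 : ε (k + 1) < 1 := hεlt1 (k + 1) (by omega)
        have habs := abs_lt.mp hcon
        have hm0 : (0:ℤ) ≤ m := by
          by_contra hneg
          push_neg at hneg
          have h1 : (m:ℝ) ≤ -1 := by exact_mod_cast (by omega : m ≤ -1)
          have h2 : (0:ℝ) < ((k:ℝ) + 1) * p := mul_pos hq hp01.1
          linarith
        have hmn : m ≤ (k:ℤ) + 1 := by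
          by_contra hgt
          push_neg at hgt
          have h1 : ((k:ℝ) + 2) ≤ (m:ℝ) := by
            exact_mod_cast (show (k:ℤ) + 2 ≤ m by omega)
          have h2 : ((k:ℝ) + 1) * p < (k:ℝ) + 1 := by nlinarith [hp01.2]
          linarith
        refine Set.mem_iUnion₂.mpr ⟨m.toNat, Finset.mem_range.mpr (by omega), ?_⟩
        rw [Metric.mem_ball, Real.dist_eq]
        have hmt : ((m.toNat : ℕ) : ℝ) = (m:ℝ) := by
          exact_mod_cast Int.toNat_of_nonneg hm0
        rw [hmt]
        have heq : p - (m:ℝ) / ((k:ℝ) + 1) = (((k:ℝ) + 1) * p - m) / ((k:ℝ) + 1) := by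
          field_simp
        rw [heq, abs_div, abs_of_pos hq]
        exact div_lt_div_of_pos_right hcon hq
      -- the sine bound
      have hsplit : π * ((k:ℝ) + 1) * p = π * (((k:ℝ) + 1) * p - m) + (m:ℝ) * π := by ring
      have hpm : |((-1:ℝ)) ^ m| = 1 := by
        rcases Int.even_or_odd m with h | h
        · rw [h.neg_one_zpow, abs_one]
        · rw [h.neg_one_zpow, abs_neg, abs_one]
      rw [hsplit, Real.sin_add_int_mul_pi, abs_mul, hpm, one_mul]
      have h2 : |Real.sin (π * (((k:ℝ) + 1) * p - m))|
          = |Real.sin (π * |((k:ℝ) + 1) * p - m|)| := by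
        rcases abs_cases (((k:ℝ) + 1) * p - m) with ⟨h, _⟩ | ⟨h, _⟩ <;> rw [h]
        rw [mul_neg, Real.sin_neg, abs_neg]
      rw [h2]
      have h3 : 2 / π * (π * |((k:ℝ) + 1) * p - m|)
          ≤ Real.sin (π * |((k:ℝ) + 1) * p - m|) := by
        apply Real.mul_le_sin (by positivity)
        calc π * |((k:ℝ) + 1) * p - m| ≤ π * (1/2) :=
              mul_le_mul_of_nonneg_left hd2 Real.pi_pos.le
          _ = π / 2 := by ring
      have h4 : 2 / π * (π * |((k:ℝ) + 1) * p - m|) = 2 * |((k:ℝ) + 1) * p - m| := by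
        field_simp
      rw [h4] at h3
      calc ε (k + 1) ≤ 2 * |((k:ℝ) + 1) * p - m| := by linarith [abs_nonneg (((k:ℝ) + 1) * p - m)]
        _ ≤ Real.sin (π * |((k:ℝ) + 1) * p - m|) := h3
        _ ≤ |Real.sin (π * |((k:ℝ) + 1) * p - m|)| := le_abs_self _
    -- sin never vanishes for positive frequencies
    have hsin_ne : ∀ n : ℕ, 1 ≤ n → Real.sin (π * (n:ℝ) * p) ≠ 0 := by
      intro n hn h0
      rw [Real.sin_eq_zero_iff] at h0
      obtain ⟨j, hj⟩ := h0
      have hnpirr : Irrational ((n:ℝ) * p) := hpirr.natCast_mul (by omega)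
      exact hnpirr.ne_int j
        (mul_left_cancel₀ Real.pi_ne_zero
          (show π * ((n:ℝ) * p) = π * (j:ℝ) by linear_combination -hj))
    -- assemble the constant
    set f : ℕ → ℝ := fun n => |Real.sin (π * (n:ℝ) * p)| * Real.exp (α * π ^ 2 * (n:ℝ) ^ 2)
      with hf
    set S : Finset ℝ := insert 1 ((Finset.Icc 1 (N + 1)).image f) with hS
    have hSne : S.Nonempty := ⟨1, Finset.mem_insert_self _ _⟩
    refine ⟨S.min' hSne, ?_, ?_⟩
    · rw [Finset.lt_min'_iff]
      intro y hy
      rcases Finset.mem_insert.mp hy with h | h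
      · rw [h]; norm_num
      · obtain ⟨j, hj, rfl⟩ := Finset.mem_image.mp h
        have hj1 : 1 ≤ j := (Finset.mem_Icc.mp hj).1
        exact mul_pos (abs_pos.mpr (hsin_ne j hj1)) (Real.exp_pos _)
    · intro n
      have hcoe : ((n : ℕ) : ℝ) = (n : ℝ) := rfl
      by_cases hcase : (n : ℕ) ≤ N + 1
      · have hmem : f (n : ℕ) ∈ S :=
          Finset.mem_insert_of_mem (Finset.mem_image_of_mem f
            (Finset.mem_Icc.mpr ⟨n.one_le, hcase⟩))
        have hC := S.min'_le _ hmem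
        calc S.min' hSne * Real.exp (-α * π ^ 2 * (n:ℝ) ^ 2)
            ≤ f (n : ℕ) * Real.exp (-α * π ^ 2 * (n:ℝ) ^ 2) :=
              mul_le_mul_of_nonneg_right hC (Real.exp_pos _).le
          _ = |Real.sin (π * (n:ℝ) * p)| := by
              rw [hf]
              simp only [hcoe]
              rw [mul_assoc, ← Real.exp_add,
                show α * π ^ 2 * (n:ℝ) ^ 2 + -α * π ^ 2 * (n:ℝ) ^ 2 = 0 by ring,
                Real.exp_zero, mul_one]
      · have h1 : N + 1 ≤ (n : ℕ) := by omega
        have hk := key (n : ℕ) h1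
        rw [hcoe] at hk
        have hC1 : S.min' hSne ≤ 1 := S.min'_le 1 (Finset.mem_insert_self _ _)
        calc S.min' hSne * Real.exp (-α * π ^ 2 * (n:ℝ) ^ 2)
            ≤ 1 * Real.exp (-α * π ^ 2 * (n:ℝ) ^ 2) :=
              mul_le_mul_of_nonneg_right hC1 (Real.exp_pos _).le
          _ = ε (n : ℕ) := by rw [one_mul, hε, hcoe]
          _ ≤ |Real.sin (π * (n:ℝ) * p)| := hk
end
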